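/- A sequence of pickup and delivery events (each order appearing exactly once as a pickup and exactly once later as a delivery) satisfies the non-crossing LIFO condition — for all orders i, j with pos(i⁺) < pos(j⁺), either pos(i⁻) ≤ pos(j⁺) or pos(j⁻) ≤ pos(i⁻) — if and only if it can be executed by a stack in which each delivery removes exactly the order currently on top of the stack. -/

import Mathlib

/-- Processing events left to right with a stack: a pickup `(o, true)` pushes `o`,
a delivery `(o, false)` is permitted only when `o` is on top of the stack, and pops it. -/
def stackRun {α : Type*} [DecidableEq α] : List (α × Bool) → List α → Option (List α)
  | [], s => some s
  | (o, true) :: rest, s => stackRun rest (o :: s)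
  | (o, false) :: rest, s =>
      match s with
      | [] => none
      | topo :: s' => if topo = o then stackRun rest s' else none

section IdxAux

variable {β : Type*} [BEq β] [LawfulBEq β]

lemma idx_cons_self (a : β) (l : List β) : (a :: l).idxOf a = 0 := by
  simp [List.idxOf_cons]

lemma idx_cons_ne {a b : β} (h : b ≠ a) (l : List β) :
    (b :: l).idxOf a = l.idxOf a + 1 := by
  have hba : (b == a) = false := by simpa using h
  simp [List.idxOf_cons, hba]

lemma idx_append_of_not_mem {a : β} {l1 : List β} (h : a ∉ l1) (l2 : List β) :
    (l1 ++ l2).idxOf a = l1.length + l2.idxOf a := by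
  induction l1 with
  | nil => simp
  | cons b t ih =>
    have hb : b ≠ a := fun hh => h (hh ▸ List.mem_cons_self)
    have ht : a ∉ t := fun hh => h (List.mem_cons_of_mem _ hh)
    have hba : (b == a) = false := by simpa using hb
    simp only [List.cons_append, List.idxOf_cons, List.length_cons]
    simp [hba, ih ht]
    omega

lemma idx_append_of_mem {a : β} {l1 : List β} (h : a ∈ l1) (l2 : List β) :
    (l1 ++ l2).idxOf a = l1.idxOf a := by
  induction l1 with
  | nil => simp at h
  | cons b t ih =>
    by_cases hb : b = a
    · subst hb
      simp [List.idxOf_cons]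
    · have ht : a ∈ t := by
        rcases List.mem_cons.mp h with h1 | h1
        · exact absurd h1.symm hb
        · exact h1
      have hba : (b == a) = false := by simpa using hb
      simp only [List.cons_append, List.idxOf_cons]
      simp [hba, ih ht]

lemma idx_lt_length {a : β} {l : List β} (h : a ∈ l) : l.idxOf a < l.length := by
  induction l with
  | nil => simp at h
  | cons b t ih =>
    by_cases hb : b = a
    · subst hb
      simp [List.idxOf_cons]
    · have ht : a ∈ t := by
        rcases List.mem_cons.mp h with h1 | h1
        · exact absurd h1.symm hb
        · exact h1
      have hba : (b == a) = false := by simpa using hb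
      have := ih ht
      simp only [List.idxOf_cons, List.length_cons]
      simp [hba]
      omega

end IdxAux

section Aux

variable {α : Type*} [DecidableEq α]

lemma stackRun_append (a b : List (α × Bool)) (s : List α) :
    stackRun (a ++ b) s = (stackRun a s).bind fun m => stackRun b m := by
  induction a generalizing s with
  | nil => rfl
  | cons e rest ih =>
    obtain ⟨o, b'⟩ := e
    cases b' with
    | true => exact ih (o :: s)
    | false =>
      cases s with
      | nil => rfl
      | cons t s' =>
        show (if t = o then stackRun (rest ++ b) s' else none)
          = (if t = o then stackRun rest s' else none).bind fun m => stackRun b m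
        by_cases h : t = o
        · simp only [h, if_true]
          exact ih s'
        · simp [h]

lemma stackRun_split : ∀ (n : ℕ) (l : List (α × Bool)) (o : α) (s : List α), l.length ≤ n →
    stackRun l (o :: s) = some [] →
    ∃ l1 l2, l = l1 ++ (o, false) :: l2 ∧ stackRun l2 s = some [] ∧
      ∀ j : α, (j, true) ∈ l1 → (j, false) ∈ l1 := by
  intro n
  induction n with
  | zero =>
    intro l o s hl hr
    have hnil : l = [] := List.length_eq_zero_iff.mp (Nat.le_zero.mp hl)
    subst hnil
    simp [stackRun] at hr
  | succ n ih =>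
    intro l o s hl hr
    cases l with
    | nil => simp [stackRun] at hr
    | cons e rest =>
      obtain ⟨p, b'⟩ := e
      cases b' with
      | true =>
        have hr' : stackRun rest (p :: o :: s) = some [] := hr
        have hlen : rest.length ≤ n := by
          simp only [List.length_cons] at hl; omega
        obtain ⟨r1, r2, hr12, hrun2, hbal1⟩ := ih rest p (o :: s) hlen hr'
        have hlen2 : r2.length ≤ n := by
          have := congrArg List.length hr12
          simp only [List.length_append, List.length_cons] at this
          omega
        obtain ⟨m1, m2, hm12, hrun3, hbal2⟩ := ih r2 o s hlen2 hrun2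
        refine ⟨(p, true) :: (r1 ++ (p, false) :: m1), m2, ?_, hrun3, ?_⟩
        · rw [hr12, hm12]
          simp
        · intro j hj
          rcases List.mem_cons.mp hj with h | h
          · have : j = p := by simpa using h
            subst this
            simp
          · rcases List.mem_append.mp h with h2 | h2
            · exact List.mem_cons_of_mem _ (List.mem_append_left _ (hbal1 j h2))
            · rcases List.mem_cons.mp h2 with h3 | h3
              · exact absurd h3 (by simp)
              · exact List.mem_cons_of_mem _
                  (List.mem_append_right _ (List.mem_cons_of_mem _ (hbal2 j h3)))
      | false =>
        have hr' : (if o = p then stackRun rest s else none) = some [] := hr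
        by_cases h : o = p
        · subst h
          rw [if_pos rfl] at hr'
          exact ⟨[], rest, rfl, hr', by simp⟩
        · rw [if_neg h] at hr'
          exact absurd hr' (by simp)

/-- A list of events is complete: each pickup/delivery occurs at most once, pickups and
deliveries pair up, pickups precede deliveries, and the non-crossing condition holds. -/
def Complete (l : List (α × Bool)) : Prop :=
  (∀ o : α, l.count (o, true) ≤ 1) ∧
  (∀ o : α, l.count (o, false) ≤ 1) ∧
  (∀ o : α, (o, true) ∈ l ↔ (o, false) ∈ l) ∧
  (∀ o : α, (o, true) ∈ l → l.idxOf (o, true) < l.idxOf (o, false)) ∧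
  (∀ i j : α, (i, true) ∈ l → (j, true) ∈ l → l.idxOf (i, true) < l.idxOf (j, true) →
    l.idxOf (i, false) ≤ l.idxOf (j, true) ∨ l.idxOf (j, false) ≤ l.idxOf (i, false))

lemma complete_run : ∀ (n : ℕ) (l : List (α × Bool)), l.length ≤ n → Complete l →
    ∀ s : List α, stackRun l s = some s := by
  intro n
  induction n with
  | zero =>
    intro l hl _ s
    have hnil : l = [] := List.length_eq_zero_iff.mp (Nat.le_zero.mp hl)
    subst hnil
    rfl
  | succ n ih =>
    intro l hl hC s
    obtain ⟨hc1, hc2, hiff, hord, hnc⟩ := hC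
    cases l with
    | nil => rfl
    | cons e rest =>
      obtain ⟨o, b'⟩ := e
      cases b' with
      | false =>
        exfalso
        have h1 : ((o, false) : α × Bool) ∈ (o, false) :: rest := List.mem_cons_self
        have h2 : ((o, true) : α × Bool) ∈ (o, false) :: rest := (hiff o).mpr h1
        have h3 := hord o h2
        rw [idx_cons_self] at h3
        omega
      | true =>
        have hmemT : ((o, true) : α × Bool) ∈ (o, true) :: rest := List.mem_cons_self
        have hmemF : ((o, false) : α × Bool) ∈ (o, true) :: rest := (hiff o).mp hmemT
        have hmemF' : ((o, false) : α × Bool) ∈ rest := by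
          rcases List.mem_cons.mp hmemF with h | h
          · exact absurd h (by simp)
          · exact h
        obtain ⟨M, R, hMR⟩ := List.append_of_mem hmemF'
        subst hMR
        -- counts of the two o-events outside their occurrences are zero
        have hoTcnt : (M ++ (o, false) :: R).count (o, true) = 0 := by
          have := hc1 o
          rw [List.count_cons_self] at this
          omega
        have hoM : ((o, true) : α × Bool) ∉ M := by
          have := List.count_eq_zero.mp hoTcnt
          intro h; exact this (by simp [h])
        have hoR : ((o, true) : α × Bool) ∉ R := by
          have := List.count_eq_zero.mp hoTcnt
          intro h; exact this (by simp [h])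
        have hoFcnt := hc2 o
        simp [List.count_cons, List.count_append] at hoFcnt
        have hfM : ((o, false) : α × Bool) ∉ M := by
          intro h
          have := List.count_pos_iff.mpr h
          omega
        have hfR : ((o, false) : α × Bool) ∉ R := by
          intro h
          have := List.count_pos_iff.mpr h
          omega
        have hdisj : ∀ e : α × Bool, e ∈ M → e ∈ R → False := by
          intro e hM hR
          have h1 : 0 < M.count e := List.count_pos_iff.mpr hM
          have h2 : 0 < R.count e := List.count_pos_iff.mpr hR
          obtain ⟨a, b⟩ := e
          have h3 : ((o, true) :: (M ++ (o, false) :: R)).count (a, b) ≤ 1 := by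
            cases b
            · exact hc2 a
            · exact hc1 a
          rw [List.count_cons, List.count_append, List.count_cons] at h3
          split_ifs at h3 <;> omega
        -- index computations
        have hidxF : ((o, true) :: (M ++ (o, false) :: R)).idxOf (o, false)
            = M.length + 1 := by
          rw [idx_cons_ne (by simp) _, idx_append_of_not_mem hfM _, idx_cons_self]
        have hidxM : ∀ e ∈ M, ((o, true) :: (M ++ (o, false) :: R)).idxOf e
            = M.idxOf e + 1 := by
          intro e he
          rw [idx_cons_ne (by rintro rfl; exact hoM he) _, idx_append_of_mem he _]
        have hidxR : ∀ e ∈ R, e ≠ (o, false) → e ∉ M →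
            ((o, true) :: (M ++ (o, false) :: R)).idxOf e
              = R.idxOf e + M.length + 2 := by
          intro e he hne hnM
          rw [idx_cons_ne (by rintro rfl; exact hoR he) _,
            idx_append_of_not_mem hnM _, idx_cons_ne (Ne.symm hne) _]
          omega
        have memM_l : ∀ e : α × Bool, e ∈ M → e ∈ (o, true) :: (M ++ (o, false) :: R) := by
          intro e he; simp [he]
        have memR_l : ∀ e : α × Bool, e ∈ R → e ∈ (o, true) :: (M ++ (o, false) :: R) := by
          intro e he; simp [he]
        -- pairing lemmas
        have HM1 : ∀ j : α, (j, true) ∈ M → (j, false) ∈ M := by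
          intro j hj
          have hjo : j ≠ o := by rintro rfl; exact hoM hj
          have hjT : ((j, true) : α × Bool) ∈ (o, true) :: (M ++ (o, false) :: R) :=
            memM_l _ hj
          have hjF := (hiff j).mp hjT
          by_contra hnot
          have hjFR : ((j, false) : α × Bool) ∈ R := by
            rcases List.mem_cons.mp hjF with h | h
            · exact absurd h (by simp)
            · rcases List.mem_append.mp h with h2 | h2
              · exact absurd h2 hnot
              · rcases List.mem_cons.mp h2 with h3 | h3
                · exact absurd (by simpa using h3) hjo
                · exact h3
          have e1 := hidxM _ hj
          have e2 := hidxR _ hjFR (by simp [hjo]) hnot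
          have hMlt : M.idxOf ((j, true) : α × Bool) < M.length := idx_lt_length hj
          have hlt : ((o, true) :: (M ++ (o, false) :: R)).idxOf (o, true)
              < ((o, true) :: (M ++ (o, false) :: R)).idxOf (j, true) := by
            rw [idx_cons_self, e1]; omega
          rcases hnc o j hmemT hjT hlt with h | h
          · rw [hidxF, e1] at h; omega
          · rw [hidxF, e2] at h; omega
        have HM2 : ∀ j : α, (j, false) ∈ M → (j, true) ∈ M := by
          intro j hj
          have hjo : j ≠ o := by rintro rfl; exact hfM hj
          have hjF : ((j, false) : α × Bool) ∈ (o, true) :: (M ++ (o, false) :: R) :=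
            memM_l _ hj
          have hjT := (hiff j).mpr hjF
          by_contra hnot
          have hjTR : ((j, true) : α × Bool) ∈ R := by
            rcases List.mem_cons.mp hjT with h | h
            · exact absurd (by simpa using h) hjo
            · rcases List.mem_append.mp h with h2 | h2
              · exact absurd h2 hnot
              · rcases List.mem_cons.mp h2 with h3 | h3
                · exact absurd h3 (by simp)
                · exact h3
          have e1 := hidxM _ hj
          have e2 := hidxR _ hjTR (by simp) hnot
          have hMlt : M.idxOf ((j, false) : α × Bool) < M.length := idx_lt_length hj
          have := hord j hjT
          rw [e1, e2] at this
          omega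
        have HR2 : ∀ j : α, (j, false) ∈ R → (j, true) ∈ R := by
          intro j hj
          have hjo : j ≠ o := by rintro rfl; exact hfR hj
          have hjF : ((j, false) : α × Bool) ∈ (o, true) :: (M ++ (o, false) :: R) :=
            memR_l _ hj
          have hjT := (hiff j).mpr hjF
          rcases List.mem_cons.mp hjT with h | h
          · exact absurd (by simpa using h) hjo
          · rcases List.mem_append.mp h with h2 | h2
            · exact absurd (HM1 j h2) (fun hM => hdisj _ hM hj)
            · rcases List.mem_cons.mp h2 with h3 | h3
              · exact absurd h3 (by simp)
              · exact h3
        have HR1 : ∀ j : α, (j, true) ∈ R → (j, false) ∈ R := by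
          intro j hj
          have hjo : j ≠ o := by rintro rfl; exact hoR hj
          have hjT : ((j, true) : α × Bool) ∈ (o, true) :: (M ++ (o, false) :: R) :=
            memR_l _ hj
          have hjF := (hiff j).mp hjT
          rcases List.mem_cons.mp hjF with h | h
          · exact absurd h (by simp)
          · rcases List.mem_append.mp h with h2 | h2
            · exact absurd (HM2 j h2) (fun hM => hdisj _ hM hj)
            · rcases List.mem_cons.mp h2 with h3 | h3
              · exact absurd (by simpa using h3) hjo
              · exact h3
        -- sublist facts
        have hMsub : M.Sublist ((o, true) :: (M ++ (o, false) :: R)) :=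
          (List.sublist_append_left M _).trans (List.sublist_cons_self _ _)
        have hRsub : R.Sublist ((o, true) :: (M ++ (o, false) :: R)) :=
          ((List.sublist_cons_self _ _).trans (List.sublist_append_right _ _)).trans
            (List.sublist_cons_self _ _)
        -- Complete M
        have hCM : Complete M := by
          refine ⟨fun j => le_trans (hMsub.count_le _) (hc1 j),
            fun j => le_trans (hMsub.count_le _) (hc2 j),
            fun j => ⟨HM1 j, HM2 j⟩, ?_, ?_⟩
          · intro j hj
            have hjF := HM1 j hj
            have := hord j (memM_l _ hj)
            rw [hidxM _ hj, hidxM _ hjF] at this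
            omega
          · intro i j hi hj hlt
            have hiF := HM1 i hi
            have hjF := HM1 j hj
            have hlt' : ((o, true) :: (M ++ (o, false) :: R)).idxOf (i, true)
                < ((o, true) :: (M ++ (o, false) :: R)).idxOf (j, true) := by
              rw [hidxM _ hi, hidxM _ hj]; omega
            rcases hnc i j (memM_l _ hi) (memM_l _ hj) hlt' with h | h
            · left; rw [hidxM _ hiF, hidxM _ hj] at h; omega
            · right; rw [hidxM _ hjF, hidxM _ hiF] at h; omega
        -- Complete R
        have hidxRT : ∀ j : α, (j, true) ∈ R →
            ((o, true) :: (M ++ (o, false) :: R)).idxOf (j, true)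
              = R.idxOf (j, true) + M.length + 2 :=
          fun j hj => hidxR _ hj (by simp) (fun hM => hdisj _ hM hj)
        have hidxRF : ∀ j : α, (j, false) ∈ R →
            ((o, true) :: (M ++ (o, false) :: R)).idxOf (j, false)
              = R.idxOf (j, false) + M.length + 2 := by
          intro j hj
          refine hidxR _ hj ?_ (fun hM => hdisj _ hM hj)
          intro h
          rw [Prod.mk.injEq] at h
          exact hfR (h.1 ▸ hj)
        have hCR : Complete R := by
          refine ⟨fun j => le_trans (hRsub.count_le _) (hc1 j),
            fun j => le_trans (hRsub.count_le _) (hc2 j),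
            fun j => ⟨HR1 j, HR2 j⟩, ?_, ?_⟩
          · intro j hj
            have hjF := HR1 j hj
            have := hord j (memR_l _ hj)
            rw [hidxRT _ hj, hidxRF _ hjF] at this
            omega
          · intro i j hi hj hlt
            have hiF := HR1 i hi
            have hjF := HR1 j hj
            have hlt' : ((o, true) :: (M ++ (o, false) :: R)).idxOf (i, true)
                < ((o, true) :: (M ++ (o, false) :: R)).idxOf (j, true) := by
              rw [hidxRT _ hi, hidxRT _ hj]; omega
            rcases hnc i j (memR_l _ hi) (memR_l _ hj) hlt' with h | h
            · left; rw [hidxRF _ hiF, hidxRT _ hj] at h; omega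
            · right; rw [hidxRF _ hjF, hidxRF _ hiF] at h; omega
        -- lengths
        have hlen : M.length ≤ n ∧ R.length ≤ n := by
          simp only [List.length_cons, List.length_append] at hl
          omega
        -- compute the run
        show stackRun (M ++ (o, false) :: R) (o :: s) = some s
        rw [stackRun_append, ih M hlen.1 hCM (o :: s)]
        show stackRun ((o, false) :: R) (o :: s) = some s
        show (if o = o then stackRun R s else none) = some s
        rw [if_pos rfl]
        exact ih R hlen.2 hCR s

end Aux

/-- A route (each order appearing exactly once as a pickup `(o, true)` and
exactly once, later, as a delivery `(o, false)`) satisfies the non-crossing LIFO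
condition iff it can be executed by a stack in which each delivery removes exactly the
order currently on top of the stack. -/
theorem stmt_3 {α : Type*} [DecidableEq α] (route : List (α × Bool))
    (h_pick : ∀ o : α, route.count (o, true) = 1)
    (h_del : ∀ o : α, route.count (o, false) = 1)
    (h_ord : ∀ o : α, route.idxOf (o, true) < route.idxOf (o, false)) :
    (∀ i j : α, route.idxOf (i, true) < route.idxOf (j, true) →
        route.idxOf (i, false) ≤ route.idxOf (j, true) ∨
        route.idxOf (j, false) ≤ route.idxOf (i, false)) ↔
    stackRun route [] = some [] := by
  have memT : ∀ o : α, (o, true) ∈ route := fun o =>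
    List.count_pos_iff.mp (by rw [h_pick o]; norm_num)
  have memF : ∀ o : α, (o, false) ∈ route := fun o =>
    List.count_pos_iff.mp (by rw [h_del o]; norm_num)
  constructor
  · intro hnc
    exact complete_run route.length route le_rfl
      ⟨fun o => (h_pick o).le, fun o => (h_del o).le,
        fun o => ⟨fun _ => memF o, fun _ => memT o⟩, fun o _ => h_ord o,
        fun i j _ _ h => hnc i j h⟩ []
  · intro hrun i j hij
    have hij_ne : i ≠ j := fun h => by subst h; exact lt_irrefl _ hij
    obtain ⟨P, Q, hPQ⟩ := List.append_of_mem (memT i)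
    have hcntT := h_pick i
    rw [hPQ, List.count_append, List.count_cons_self] at hcntT
    have hiTP : ((i, true) : α × Bool) ∉ P := by
      intro h
      have := List.count_pos_iff.mpr h
      omega
    have hidxiT : route.idxOf (i, true) = P.length := by
      rw [hPQ, idx_append_of_not_mem hiTP _, idx_cons_self]
      omega
    -- decompose the run
    have hrun' := hrun
    rw [hPQ, stackRun_append] at hrun'
    obtain ⟨m, hm1, hm2⟩ := Option.bind_eq_some_iff.mp hrun'
    have hm2' : stackRun Q (i :: m) = some [] := hm2
    obtain ⟨l1, l2, hQ, _, hbal⟩ := stackRun_split Q.length Q i m le_rfl hm2'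
    subst hQ
    have hcntF := h_del i
    rw [hPQ] at hcntF
    simp [List.count_append, List.count_cons] at hcntF
    have hiFP : ((i, false) : α × Bool) ∉ P := by
      intro h
      have := List.count_pos_iff.mpr h
      omega
    have hiFl1 : ((i, false) : α × Bool) ∉ l1 := by
      intro h
      have := List.count_pos_iff.mpr h
      omega
    have hidxiF : route.idxOf (i, false) = P.length + l1.length + 1 := by
      rw [hPQ, idx_append_of_not_mem hiFP _, idx_cons_ne (by simp) _,
        idx_append_of_not_mem hiFl1 _, idx_cons_self]
      omega
    by_cases hjl1 : ((j, true) : α × Bool) ∈ l1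
    · right
      have hjF : ((j, false) : α × Bool) ∈ l1 := hbal j hjl1
      have hcj := h_del j
      rw [hPQ] at hcj
      simp [List.count_append, List.count_cons, hij_ne] at hcj
      have hjFP : ((j, false) : α × Bool) ∉ P := by
        intro h
        have h1 := List.count_pos_iff.mpr h
        have h2 := List.count_pos_iff.mpr hjF
        omega
      have hidxjF : route.idxOf (j, false) = P.length + l1.idxOf (j, false) + 1 := by
        rw [hPQ, idx_append_of_not_mem hjFP _, idx_cons_ne (by simp) _,
          idx_append_of_mem hjF _]
        omega
      have hlt : l1.idxOf ((j, false) : α × Bool) < l1.length := idx_lt_length hjF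
      omega
    · left
      have hjP : ((j, true) : α × Bool) ∉ P := by
        intro h
        have h1 : route.idxOf (j, true) < P.length := by
          rw [hPQ, idx_append_of_mem h _]
          exact idx_lt_length h
        omega
      have hjne : ((i, true) : α × Bool) ≠ (j, true) := by simp [hij_ne]
      have hjl2 : ((j, true) : α × Bool) ∈ l2 := by
        have hjmem := memT j
        rw [hPQ] at hjmem
        rcases List.mem_append.mp hjmem with h | h
        · exact absurd h hjP
        · rcases List.mem_cons.mp h with h2 | h2
          · exact absurd h2.symm hjne
          · rcases List.mem_append.mp h2 with h3 | h3
            · exact absurd h3 hjl1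
            · rcases List.mem_cons.mp h3 with h4 | h4
              · exact absurd h4 (by simp)
              · exact h4
      have hidxjT : route.idxOf (j, true)
          = P.length + l1.length + l2.idxOf (j, true) + 2 := by
        rw [hPQ, idx_append_of_not_mem hjP _, idx_cons_ne hjne _,
          idx_append_of_not_mem hjl1 _, idx_cons_ne (by simp) _]
        omega
      omega
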